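/- Let a > 0 and let F : ℝ⁴ → ℝ⁴ be the vector field F(q₁, q₂, v₁, v₂) = (v₁, v₂, −2q₁ + q₂ + q₂² − 2q₁q₂, a(−2q₂ + q₁ + 2q₁q₂ − q₁²)). The Jacobian matrix of F at the equilibrium (1, 2, 0, 0) has characteristic polynomial X⁴ + 6X² − 9a; its eigenvalues are the real pair ±√(3(√(1+a) − 1)) and the purely imaginary pair ±i√(3(√(1+a) + 1)). In particular √(3(√(1+a) − 1)) > 0 is a real positive eigenvalue, so the equilibrium (1, 2) is linearly unstable, with one stable, one unstable and a two-dimensional centre direction. -/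

import Mathlib

open Polynomial

/-- The vector field `F(q₁, q₂, v₁, v₂) =
(v₁, v₂, -2q₁ + q₂ + q₂² - 2q₁q₂, a(-2q₂ + q₁ + 2q₁q₂ - q₁²))` on ℝ⁴ governing
the symmetric invariant manifold of the 6-particle alternating FPU α-chain
(α = 1, m = 1/a). -/
def fpuField (a : ℝ) (x : Fin 4 → ℝ) : Fin 4 → ℝ :=
  ![x 2, x 3,
    -2 * x 0 + x 1 + (x 1) ^ 2 - 2 * x 0 * x 1,
    a * (-2 * x 1 + x 0 + 2 * x 0 * x 1 - (x 0) ^ 2)]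

/-- The Jacobian matrix of a map `ℝ⁴ → ℝ⁴` at the point `x`. -/
noncomputable def jacobian (F : (Fin 4 → ℝ) → Fin 4 → ℝ) (x : Fin 4 → ℝ) :
    Matrix (Fin 4) (Fin 4) ℝ :=
  Matrix.of fun i j => fderiv ℝ F x (Pi.single j 1) i

/-- Auxiliary: the `j`-th coordinate projection as a continuous linear map. -/
noncomputable def fpuProj (j : Fin 4) : (Fin 4 → ℝ) →L[ℝ] ℝ :=
  ContinuousLinearMap.proj j

set_option maxHeartbeats 2000000 in
/-- Auxiliary: the Jacobian of the FPU field at `(1,2,0,0)` explicitly. -/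
theorem fpu_jacobian_eq (a : ℝ) : jacobian (fpuField a) ![1, 2, 0, 0] =
    !![0,0,1,0; 0,0,0,1; -6,3,0,0; 3*a,0,0,0] := by
  set p : Fin 4 → ℝ := ![1, 2, 0, 0] with hp
  have h0 : HasFDerivAt (fun x : Fin 4 → ℝ => x 0) (fpuProj 0) p := hasFDerivAt_apply 0 p
  have h1 : HasFDerivAt (fun x : Fin 4 → ℝ => x 1) (fpuProj 1) p := hasFDerivAt_apply 1 p
  have h2 : HasFDerivAt (fun x : Fin 4 → ℝ => x 2) (fpuProj 2) p := hasFDerivAt_apply 2 p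
  have h3 : HasFDerivAt (fun x : Fin 4 → ℝ => x 3) (fpuProj 3) p := hasFDerivAt_apply 3 p
  have hc2 : HasFDerivAt (fun x : Fin 4 → ℝ => -2 * x 0 + x 1 + (x 1) ^ 2 - 2 * x 0 * x 1)
      ((-6 : ℝ) • fpuProj 0 + (3 : ℝ) • fpuProj 1) p := by
    have hfun : (fun x : Fin 4 → ℝ => -2 * x 0 + x 1 + (x 1) ^ 2 - 2 * x 0 * x 1)
        = fun x : Fin 4 → ℝ => -2 * x 0 + x 1 + x 1 * x 1 - 2 * (x 0 * x 1) := by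
      funext x; ring
    rw [hfun]
    have := (((h0.const_mul (-2)).add h1).add (h1.mul h1)).sub ((h0.mul h1).const_mul 2)
    refine this.congr_fderiv ?_
    ext v
    simp [hp, fpuProj]
    ring
  have hc3 : HasFDerivAt (fun x : Fin 4 → ℝ => a * (-2 * x 1 + x 0 + 2 * x 0 * x 1 - (x 0) ^ 2))
      ((3 * a : ℝ) • fpuProj 0) p := by
    have hfun : (fun x : Fin 4 → ℝ => a * (-2 * x 1 + x 0 + 2 * x 0 * x 1 - (x 0) ^ 2))
        = fun x : Fin 4 → ℝ => a * (-2 * x 1 + x 0 + 2 * (x 0 * x 1) - x 0 * x 0) := by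
      funext x; ring
    rw [hfun]
    have := ((((h1.const_mul (-2)).add h0).add ((h0.mul h1).const_mul 2)).sub
      (h0.mul h0)).const_mul a
    refine this.congr_fderiv ?_
    ext v
    simp [hp, fpuProj]
    ring
  have hF : HasFDerivAt (fpuField a)
      (ContinuousLinearMap.pi ![fpuProj 2, fpuProj 3,
        (-6 : ℝ) • fpuProj 0 + (3 : ℝ) • fpuProj 1, (3 * a : ℝ) • fpuProj 0]) p := by
    apply hasFDerivAt_pi''
    intro i
    rw [ContinuousLinearMap.proj_pi]
    fin_cases i
    · simpa [fpuField] using h2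
    · simpa [fpuField] using h3
    · simpa [fpuField] using hc2
    · simpa [fpuField] using hc3
  have hfd := hF.fderiv
  clear h0 h1 h2 h3 hc2 hc3 hF
  funext i j
  rw [jacobian]
  simp only [Matrix.of_apply, hfd, ContinuousLinearMap.pi_apply]
  fin_cases i <;> fin_cases j <;>
    simp [fpuProj, Pi.single_apply, Matrix.vecHead, Matrix.vecTail]

/-- Auxiliary: the characteristic polynomial of the explicit Jacobian matrix. -/
theorem fpu_charpoly_eq (a : ℝ) :
    (!![0,0,1,0; 0,0,0,1; -6,3,0,0; 3*a,0,0,0] : Matrix (Fin 4) (Fin 4) ℝ).charpoly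
      = X ^ 4 + C 6 * X ^ 2 - C (9 * a) := by
  rw [Matrix.charpoly]
  simp (config := { decide := true }) [Matrix.charmatrix_apply, Matrix.det_succ_row_zero,
    Fin.sum_univ_succ, Matrix.one_apply, Matrix.diagonal_apply, Fin.succ_ne_zero,
    show ((2:Fin 4).succAbove 2 : Fin 4) = 3 from rfl]
  have h : (C 3 : ℝ[X]) * (C 3 * C a) = C 9 * C a := by
    simp only [← map_mul]; congr 1; ring
  rw [h]; ring

/-- Auxiliary: the roots of `X⁴ + 6X² - 9a` over `ℂ`. -/
theorem fpu_roots_eq (a : ℝ) (ha : 0 < a) :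
    ((X ^ 4 + C 6 * X ^ 2 - C (9 * a) : ℝ[X]).map (algebraMap ℝ ℂ)).roots =
      {((Real.sqrt (3 * (Real.sqrt (1 + a) - 1)) : ℝ) : ℂ),
        -((Real.sqrt (3 * (Real.sqrt (1 + a) - 1)) : ℝ) : ℂ),
        Complex.I * ((Real.sqrt (3 * (Real.sqrt (1 + a) + 1)) : ℝ) : ℂ),
        -(Complex.I * ((Real.sqrt (3 * (Real.sqrt (1 + a) + 1)) : ℝ) : ℂ))} := by
  set r : ℝ := 3 * (Real.sqrt (1 + a) - 1) with hr
  set s : ℝ := 3 * (Real.sqrt (1 + a) + 1) with hs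
  have h1a : (0:ℝ) ≤ 1 + a := by positivity
  have hsq : Real.sqrt (1 + a) ^ 2 = 1 + a := Real.sq_sqrt h1a
  have hsqge : (1:ℝ) ≤ Real.sqrt (1 + a) := by
    have := Real.sqrt_le_sqrt (show (1:ℝ) ≤ 1 + a by linarith)
    simpa using this
  have hr0 : 0 ≤ r := by rw [hr]; nlinarith
  have hs0 : 0 ≤ s := by rw [hs]; nlinarith
  set A : ℂ := ((Real.sqrt r : ℝ) : ℂ) with hA
  set B : ℂ := ((Real.sqrt s : ℝ) : ℂ) with hB
  have hA2 : A ^ 2 = ((r : ℝ) : ℂ) := by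
    rw [hA, ← Complex.ofReal_pow, Real.sq_sqrt hr0]
  have hB2 : B ^ 2 = ((s : ℝ) : ℂ) := by
    rw [hB, ← Complex.ofReal_pow, Real.sq_sqrt hs0]
  have h6 : ((6:ℝ) : ℂ) = ((s : ℝ) : ℂ) - ((r : ℝ) : ℂ) := by
    rw [← Complex.ofReal_sub]
    norm_cast
    rw [hr, hs]; ring
  have h9 : ((9 * a : ℝ) : ℂ) = ((r : ℝ) : ℂ) * ((s : ℝ) : ℂ) := by
    rw [← Complex.ofReal_mul]
    norm_cast
    rw [hr, hs]; nlinarith [hsq]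
  have hmap : (X ^ 4 + C 6 * X ^ 2 - C (9 * a) : ℝ[X]).map (algebraMap ℝ ℂ)
      = (({A, -A, Complex.I * B, -(Complex.I * B)} : Multiset ℂ).map fun z => X - C z).prod := by
    have hprod : (({A, -A, Complex.I * B, -(Complex.I * B)} : Multiset ℂ).map
        fun z => X - C z).prod
        = (X - C A) * (X - C (-A)) * (X - C (Complex.I * B)) * (X - C (-(Complex.I * B))) := by
      simp only [Multiset.insert_eq_cons, Multiset.map_cons, Multiset.map_singleton,
        Multiset.prod_cons, Multiset.prod_singleton]
      ring
    rw [hprod]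
    have hmap' : (X ^ 4 + C 6 * X ^ 2 - C (9 * a) : ℝ[X]).map (algebraMap ℝ ℂ)
        = X ^ 4 + C ((6:ℝ):ℂ) * X ^ 2 - C (((9 * a : ℝ)):ℂ) := by
      simp [Polynomial.map_sub, Polynomial.map_add, Polynomial.map_pow, Polynomial.map_mul,
        Polynomial.map_X, Polynomial.map_C, Complex.coe_algebraMap]
    rw [hmap']
    have e1 : ((X - C A) * (X - C (-A)) * (X - C (Complex.I * B))
          * (X - C (-(Complex.I * B))) : ℂ[X])
        = (X ^ 2 - C (A ^ 2)) * (X ^ 2 - C ((Complex.I * B) ^ 2)) := by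
      simp only [map_neg, map_mul, map_pow]
      ring
    have e2 : ((Complex.I * B) ^ 2 : ℂ) = -((s : ℝ) : ℂ) := by
      rw [mul_pow, Complex.I_sq, hB2]; ring
    rw [e1, hA2, e2, h6, h9]
    simp only [map_sub, map_mul, map_neg]
    ring
  rw [hmap, Polynomial.roots_multiset_prod_X_sub_C]

/-- At the equilibrium `(1, 2, 0, 0)` of the vector field `F`, the Jacobian has
characteristic polynomial `X⁴ + 6X² - 9a`, whose (complex) roots, i.e. the
eigenvalues, are the real pair `±√(3(√(1+a) - 1))` and the purely imaginary
pair `±i√(3(√(1+a) + 1))`; in particular `√(3(√(1+a) - 1)) > 0` is a real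
positive eigenvalue, so the equilibrium `(1, 2)` is linearly unstable, with one
stable, one unstable and a two-dimensional centre direction. -/
theorem jacobian_at_one_two (a : ℝ) (ha : 0 < a) :
    fpuField a ![1, 2, 0, 0] = 0 ∧
    (jacobian (fpuField a) ![1, 2, 0, 0]).charpoly =
      X ^ 4 + C 6 * X ^ 2 - C (9 * a) ∧
    ((jacobian (fpuField a) ![1, 2, 0, 0]).charpoly.map (algebraMap ℝ ℂ)).roots =
      {((Real.sqrt (3 * (Real.sqrt (1 + a) - 1)) : ℝ) : ℂ),
        -((Real.sqrt (3 * (Real.sqrt (1 + a) - 1)) : ℝ) : ℂ),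
        Complex.I * ((Real.sqrt (3 * (Real.sqrt (1 + a) + 1)) : ℝ) : ℂ),
        -(Complex.I * ((Real.sqrt (3 * (Real.sqrt (1 + a) + 1)) : ℝ) : ℂ))} ∧
    0 < Real.sqrt (3 * (Real.sqrt (1 + a) - 1)) := by
  have hcp : (jacobian (fpuField a) ![1, 2, 0, 0]).charpoly
      = X ^ 4 + C 6 * X ^ 2 - C (9 * a) := by
    rw [fpu_jacobian_eq a, fpu_charpoly_eq a]
  refine ⟨?_, hcp, ?_, ?_⟩
  · funext i
    fin_cases i <;> simp [fpuField] <;> norm_num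
  · rw [hcp]
    exact fpu_roots_eq a ha
  · apply Real.sqrt_pos.2
    have h1a : (0:ℝ) ≤ 1 + a := by positivity
    have hsq : Real.sqrt (1 + a) ^ 2 = 1 + a := Real.sq_sqrt h1a
    nlinarith [Real.sqrt_nonneg (1 + a)]
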